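/- Let ℓ be a closed walk in G based at a vertex v. Then ℓ has weight less than or equal to the weight of every closed walk in G based at v with signature equal to sig(ℓ), if and only if for every h ∈ A the unique lift of ℓ starting at (v,h) in the Z₂-homology cover Ḡ has weight less than or equal to the weight of every walk in Ḡ from (v,h) to (v, h + sig(ℓ)). -/

import Mathlib

/-- The `Z₂`-homology cover of `G`: the simple graph on `V × (Fin β → ZMod 2)` in which
`(u, h)` and `(v, h')` are adjacent iff `u` and `v` are adjacent in `G` and
`h' = h + σ u v`. -/
def HomologyCover (β : ℕ) {V : Type*} (G : SimpleGraph V)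
    (σ : V → V → (Fin β → ZMod 2)) (hσ : ∀ u v, σ u v = σ v u) :
    SimpleGraph (V × (Fin β → ZMod 2)) where
  Adj x y := G.Adj x.1 y.1 ∧ y.2 = x.2 + σ x.1 y.1
  symm := ⟨by
    rintro ⟨u, h⟩ ⟨v, h'⟩ ⟨hadj, heq⟩
    refine ⟨hadj.symm, ?_⟩
    simp only at heq ⊢
    subst heq
    rw [hσ v u]
    funext i
    simp only [Pi.add_apply]
    rw [add_assoc, CharTwo.add_self_eq_zero, add_zero]⟩
  loopless := ⟨fun x hx => G.loopless.irrefl x.1 hx.1⟩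

/-- The covering projection `π (v, h) = v`, as a graph homomorphism from the
`Z₂`-homology cover of `G` to `G`. -/
def homologyProj (β : ℕ) {V : Type*} (G : SimpleGraph V)
    (σ : V → V → (Fin β → ZMod 2)) (hσ : ∀ u v, σ u v = σ v u) :
    HomologyCover β G σ hσ →g G where
  toFun := Prod.fst
  map_rel' := fun hadj => And.left hadj

/-- The signature of a walk: the sum of `σ x y` over the darts `(x, y)` traversed by the
walk, with multiplicity. -/
def walkSig {β : ℕ} {V : Type*} {G : SimpleGraph V} (σ : V → V → (Fin β → ZMod 2))
    {u v : V} (p : G.Walk u v) : Fin β → ZMod 2 :=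
  (p.darts.map fun d => σ d.toProd.1 d.toProd.2).sum

/-- The weight of a walk: the sum of `w x y` over the darts `(x, y)` traversed by the
walk, with multiplicity. -/
def walkWeight {V : Type*} {G : SimpleGraph V} (w : V → V → ℝ)
    {u v : V} (p : G.Walk u v) : ℝ :=
  (p.darts.map fun d => w d.toProd.1 d.toProd.2).sum

section Helpers

variable {β : ℕ} {V : Type*} {G : SimpleGraph V}
  {σ : V → V → (Fin β → ZMod 2)} {hσ : ∀ u v, σ u v = σ v u} {w : V → V → ℝ}

lemma walkWeight_copy {u v u' v'} (p : G.Walk u v) (hu : u = u') (hv : v = v') :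
    walkWeight w (p.copy hu hv) = walkWeight w p := by
  simp [walkWeight, SimpleGraph.Walk.darts_copy]

lemma walkSig_map_proj {a b : V × (Fin β → ZMod 2)}
    (q : (HomologyCover β G σ hσ).Walk a b) :
    b.2 = a.2 + walkSig σ (q.map (homologyProj β G σ hσ)) := by
  induction q with
  | nil => simp [walkSig]
  | cons e q ih =>
    simp only [SimpleGraph.Walk.map_cons, walkSig, SimpleGraph.Walk.darts_cons,
      List.map_cons, List.sum_cons] at *
    rw [ih, And.right e, add_assoc]
    rfl

lemma walkWeight_map_proj {a b : V × (Fin β → ZMod 2)}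
    (q : (HomologyCover β G σ hσ).Walk a b) :
    walkWeight (fun x y => w x.1 y.1) q
      = walkWeight w (q.map (homologyProj β G σ hσ)) := by
  induction q with
  | nil => simp [walkWeight]
  | cons e q ih =>
    simp only [SimpleGraph.Walk.map_cons, walkWeight, SimpleGraph.Walk.darts_cons,
      List.map_cons, List.sum_cons] at *
    rw [ih]
    rfl

lemma walkSig_cons {a c d : V} (e : G.Adj a c) (p : G.Walk c d) :
    walkSig σ (SimpleGraph.Walk.cons e p) = σ a c + walkSig σ p := by
  simp [walkSig]

lemma exists_lift {u v' : V} (p : G.Walk u v') (h : Fin β → ZMod 2) :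
    ∃ q : (HomologyCover β G σ hσ).Walk (u, h) (v', h + walkSig σ p),
      q.map (homologyProj β G σ hσ) = p := by
  induction p generalizing h with
  | nil =>
    refine ⟨SimpleGraph.Walk.nil.copy rfl (by simp [walkSig]), by simp; rfl⟩
  | @cons a c d e p ih =>
    obtain ⟨q, hq⟩ := ih (h + σ a c)
    have hadj : (HomologyCover β G σ hσ).Adj (a, h) (c, h + σ a c) := And.intro e rfl
    have hend : (d, h + σ a c + walkSig σ p)
        = (d, h + walkSig σ (SimpleGraph.Walk.cons e p)) := by
      rw [walkSig_cons, add_assoc]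
    refine ⟨(SimpleGraph.Walk.cons hadj q).copy rfl hend, ?_⟩
    simp [SimpleGraph.Walk.map_copy, hq]; rfl

end Helpers

/-- A closed walk `ℓ` based at `v` has weight at most that of every closed walk based at
`v` with the same signature, if and only if for every `h` the lift of `ℓ` starting at
`(v, h)` has weight at most that of every walk in the `Z₂`-homology cover from `(v, h)`
to `(v, h + sig ℓ)`. -/
theorem minimal_loop_iff_lifts_shortest (β : ℕ) {V : Type*} (G : SimpleGraph V)
    (σ : V → V → (Fin β → ZMod 2)) (hσ : ∀ u v, σ u v = σ v u)
    (w : V → V → ℝ) (hw : ∀ x y, w x y = w y x)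
    (v : V) (ℓ : G.Walk v v) :
    (∀ ℓ' : G.Walk v v, walkSig σ ℓ' = walkSig σ ℓ →
        walkWeight w ℓ ≤ walkWeight w ℓ') ↔
    (∀ (h : Fin β → ZMod 2)
        (q : (HomologyCover β G σ hσ).Walk (v, h) (v, h + walkSig σ ℓ)),
        q.map (homologyProj β G σ hσ) = ℓ →
        ∀ q' : (HomologyCover β G σ hσ).Walk (v, h) (v, h + walkSig σ ℓ),
          walkWeight (fun x y => w x.1 y.1) q ≤ walkWeight (fun x y => w x.1 y.1) q') := by
  constructor
  · intro hmin h q hq q'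
    have hsig : walkSig σ (q'.map (homologyProj β G σ hσ)) = walkSig σ ℓ := by
      have := walkSig_map_proj q'
      simp only at this
      exact add_left_cancel this.symm
    rw [walkWeight_map_proj, walkWeight_map_proj, hq]
    exact hmin _ hsig
  · intro hlift ℓ' hsig
    obtain ⟨q, hq⟩ := exists_lift (hσ := hσ) ℓ 0
    obtain ⟨q', hq'⟩ := exists_lift (hσ := hσ) ℓ' 0
    have hend : ((v, (0 : Fin β → ZMod 2) + walkSig σ ℓ') : V × (Fin β → ZMod 2))
        = (v, 0 + walkSig σ ℓ) := by rw [hsig]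
    have := hlift 0 q hq (q'.copy rfl hend)
    rw [walkWeight_copy, walkWeight_map_proj, walkWeight_map_proj, hq, hq'] at this
    exact this
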